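/- For α₀ > 0, in the standard Fréchet-Welsch second marginal with density p⁽²⁾(y) = α₀·y^{-1-2α₀}·exp(-y^{-α₀}), the covariance of y^{-α₀} and log y equals -1/α₀. -/

import Mathlib

open Real MeasureTheory Set

open Filter in
lemma aux_integrable (n : ℕ) (hn : 1 ≤ n) :
    IntegrableOn (fun x : ℝ => x ^ n * Real.log x * Real.exp (-x)) (Ioi 0) := by
  have hmeas : AEStronglyMeasurable (fun x : ℝ => x ^ n * Real.log x * Real.exp (-x))
      (volume.restrict (Ioi (0:ℝ))) := by
    apply Measurable.aestronglyMeasurable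
    exact ((measurable_id.pow_const n).mul Real.measurable_log).mul
      (Real.measurable_exp.comp measurable_neg)
  rw [← Ioc_union_Ioi_eq_Ioi (zero_le_one (α := ℝ)), integrableOn_union]
  constructor
  · -- bounded by 1 on (0,1]
    refine Integrable.mono' (integrable_const 1)
      (hmeas.mono_measure (Measure.restrict_mono Ioc_subset_Ioi_self le_rfl)) ?_
    rw [ae_restrict_iff' measurableSet_Ioc]
    filter_upwards with x hx
    obtain ⟨hx0, hx1⟩ := hx
    have h1 : |x ^ n * Real.log x * Real.exp (-x)| ≤ x ^ n * |Real.log x| * 1 := by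
      rw [abs_mul, abs_mul, abs_of_nonneg (pow_nonneg hx0.le n),
        abs_of_nonneg (Real.exp_nonneg _)]
      gcongr
      exact Real.exp_le_one_iff.mpr (by linarith)
    have h2 : x ^ n ≤ x := by
      calc x ^ n ≤ x ^ 1 := pow_le_pow_of_le_one hx0.le hx1 hn
      _ = x := pow_one x
    have h3 : |Real.log x| ≤ 1 / x := by
      rw [abs_of_nonpos (Real.log_nonpos hx0.le hx1), ← Real.log_inv]
      calc Real.log x⁻¹ ≤ x⁻¹ - 1 := Real.log_le_sub_one_of_pos (by positivity)
      _ ≤ 1 / x := by rw [one_div]; linarith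
    calc |x ^ n * Real.log x * Real.exp (-x)| ≤ x ^ n * |Real.log x| * 1 := h1
      _ ≤ x * (1/x) * 1 := by gcongr
      _ = 1 := by field_simp
  · -- bounded by exp(-x) * x^(n+1) on (1,∞)
    have hint : IntegrableOn (fun x : ℝ => Real.exp (-x) * x ^ ((n + 2 : ℝ) - 1)) (Ioi 1) :=
      (Real.GammaIntegral_convergent (by positivity : (0:ℝ) < n + 2)).mono_set
        (Ioi_subset_Ioi zero_le_one)
    refine Integrable.mono' hint
      (hmeas.mono_measure (Measure.restrict_mono (Ioi_subset_Ioi zero_le_one) le_rfl)) ?_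
    rw [ae_restrict_iff' measurableSet_Ioi]
    filter_upwards with x hx
    have hx1 : (1:ℝ) < x := hx
    have hx0 : (0:ℝ) < x := by linarith
    have hlog : 0 ≤ Real.log x := Real.log_nonneg hx1.le
    have hrw : x ^ ((n + 2 : ℝ) - 1) = x ^ (n + 1) := by
      rw [show (n + 2 : ℝ) - 1 = ((n + 1 : ℕ) : ℝ) by push_cast; ring, Real.rpow_natCast]
    rw [hrw, Real.norm_eq_abs, abs_of_nonneg (by positivity)]
    calc x ^ n * Real.log x * Real.exp (-x) ≤ x ^ n * x * Real.exp (-x) := by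
          gcongr
          exact Real.log_le_sub_one_of_pos hx0 |>.trans (by linarith)
      _ = Real.exp (-x) * x ^ (n + 1) := by ring

open Filter in
lemma key_ftc :
    ∫ x in Ioi (0:ℝ), (x ^ 2 - 2 * x) * Real.log x * Real.exp (-x) = 1 := by
  set F : ℝ → ℝ := fun x => -(x ^ 2 * Real.exp (-x) * Real.log x) - (x + 1) * Real.exp (-x)
    with hF
  have hexp : ∀ x : ℝ, HasDerivAt (fun y => Real.exp (-y)) (-Real.exp (-x)) x := by
    intro x
    simpa [Function.comp_def] using (Real.hasDerivAt_exp (-x)).comp x ((hasDerivAt_id x).neg)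
  have hderiv : ∀ x ∈ Ioi (0:ℝ),
      HasDerivAt F ((x ^ 2 - 2 * x) * Real.log x * Real.exp (-x)) x := by
    intro x hx
    have hx0 : (0:ℝ) < x := hx
    have h1 : HasDerivAt (fun y : ℝ => y ^ 2 * Real.exp (-y) * Real.log y)
        ((2 * x * Real.exp (-x) + x ^ 2 * (-Real.exp (-x))) * Real.log x
          + x ^ 2 * Real.exp (-x) * x⁻¹) x := by
      have := (((hasDerivAt_pow 2 x).mul (hexp x)).mul (Real.hasDerivAt_log hx0.ne'))
      refine this.congr_deriv ?_
      simp only [Pi.mul_apply]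
      norm_num
    have h2 : HasDerivAt (fun y : ℝ => (y + 1) * Real.exp (-y))
        (1 * Real.exp (-x) + (x + 1) * (-Real.exp (-x))) x :=
      ((hasDerivAt_id x).add_const 1).mul (hexp x)
    have := (h1.neg).sub h2
    refine this.congr_deriv ?_
    field_simp
    ring
  have hint : IntegrableOn (fun x : ℝ => (x ^ 2 - 2 * x) * Real.log x * Real.exp (-x))
      (Ioi (0:ℝ)) := by
    have := (aux_integrable 2 one_le_two).sub ((aux_integrable 1 le_rfl).const_mul 2)
    refine this.congr (Filter.Eventually.of_forall fun x => ?_)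
    simp only [Pi.sub_apply, pow_one]
    ring
  have htop : Tendsto F atTop (nhds 0) := by
    have t1 : Tendsto (fun x : ℝ => x ^ 2 * Real.exp (-x) * Real.log x) atTop (nhds 0) := by
      have h3 : Tendsto (fun x : ℝ => x ^ 3 * Real.exp (-x)) atTop (nhds 0) :=
        tendsto_pow_mul_exp_neg_atTop_nhds_zero 3
      refine tendsto_of_tendsto_of_tendsto_of_le_of_le' tendsto_const_nhds h3 ?_ ?_
      · filter_upwards [eventually_ge_atTop (1:ℝ)] with x hx
        have : 0 ≤ Real.log x := Real.log_nonneg hx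
        positivity
      · filter_upwards [eventually_ge_atTop (1:ℝ)] with x hx
        have h0 : (0:ℝ) < x := by linarith
        have : Real.log x ≤ x := (Real.log_le_sub_one_of_pos h0).trans (by linarith)
        calc x ^ 2 * Real.exp (-x) * Real.log x ≤ x ^ 2 * Real.exp (-x) * x := by gcongr
          _ = x ^ 3 * Real.exp (-x) := by ring
    have t2 : Tendsto (fun x : ℝ => (x + 1) * Real.exp (-x)) atTop (nhds 0) := by
      have := (tendsto_pow_mul_exp_neg_atTop_nhds_zero 1).add
        (Real.tendsto_exp_neg_atTop_nhds_zero)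
      simpa [add_mul] using this
    simpa using (t1.neg).sub t2
  have hcont : ContinuousWithinAt F (Ici 0) 0 := by
    have hF0 : F 0 = -1 := by simp [hF]
    rw [ContinuousWithinAt, hF0, ← Ioi_insert, nhdsWithin_insert]
    rw [tendsto_sup]
    constructor
    · rw [hF0.symm]; exact tendsto_pure_nhds F 0
    · have t1 : Tendsto (fun x : ℝ => x ^ 2 * Real.exp (-x) * Real.log x)
          (nhdsWithin 0 (Ioi 0)) (nhds 0) := by
        have h1 : Tendsto (fun x : ℝ => Real.log x * x ^ (2:ℝ))
            (nhdsWithin 0 (Ioi 0)) (nhds 0) := tendsto_log_mul_rpow_nhdsGT_zero two_pos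
        have h2 : Tendsto (fun x : ℝ => Real.exp (-x)) (nhdsWithin 0 (Ioi 0)) (nhds 1) := by
          have : Continuous (fun x : ℝ => Real.exp (-x)) := Real.continuous_exp.comp continuous_neg
          simpa using (this.tendsto 0).mono_left nhdsWithin_le_nhds
        have := h1.mul h2
        rw [zero_mul] at this
        refine this.congr' ?_
        filter_upwards [self_mem_nhdsWithin] with x hx
        have hx0 : (0:ℝ) < x := hx
        rw [show x ^ (2:ℝ) = x ^ (2:ℕ) from Real.rpow_natCast x 2]
        ring
      have t2 : Tendsto (fun x : ℝ => (x + 1) * Real.exp (-x)) (nhdsWithin 0 (Ioi 0)) (nhds 1) := by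
        have : Continuous (fun x : ℝ => (x + 1) * Real.exp (-x)) := by continuity
        simpa using (this.tendsto 0).mono_left nhdsWithin_le_nhds
      have := (t1.neg).sub t2
      simpa using this
  have := integral_Ioi_of_hasDerivAt_of_tendsto hcont hderiv hint htop
  rw [this]
  simp [hF]

/-- In the standard Fréchet-Welsch second marginal with density
`p⁽²⁾(y) = α₀ y^{-1-2α₀} exp(-y^{-α₀})`, the covariance of `y^{-α₀}` and `log y`
equals `-1/α₀`. -/
theorem standard_frechetWelsch_cov_pow_log (α₀ : ℝ) (hα₀ : 0 < α₀) :
    (∫ y in Set.Ioi (0:ℝ),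
        y ^ (-α₀) * Real.log y * (α₀ * y ^ (-1 - 2 * α₀) * Real.exp (-y ^ (-α₀))))
      - (∫ y in Set.Ioi (0:ℝ),
          y ^ (-α₀) * (α₀ * y ^ (-1 - 2 * α₀) * Real.exp (-y ^ (-α₀))))
        * (∫ y in Set.Ioi (0:ℝ),
            Real.log y * (α₀ * y ^ (-1 - 2 * α₀) * Real.exp (-y ^ (-α₀))))
      = -(1 / α₀) := by
  have hp : (-α₀) ≠ 0 := neg_ne_zero.mpr hα₀.ne'
  have habs : |(-α₀)| = α₀ := by rw [abs_neg, abs_of_pos hα₀]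
  -- generic change of variables
  have key : ∀ g : ℝ → ℝ,
      (∫ y in Ioi (0:ℝ), (α₀ * y ^ (-α₀ - 1)) * g (y ^ (-α₀))) = ∫ t in Ioi (0:ℝ), g t := by
    intro g
    rw [← integral_comp_rpow_Ioi g hp]
    refine setIntegral_congr_fun measurableSet_Ioi fun y hy => ?_
    rw [smul_eq_mul, habs]
  -- I2
  have hI2 : (∫ y in Set.Ioi (0:ℝ),
      y ^ (-α₀) * (α₀ * y ^ (-1 - 2 * α₀) * Real.exp (-y ^ (-α₀)))) = 2 := by
    have := key (fun t => t ^ 2 * Real.exp (-t))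
    have heq : (∫ y in Set.Ioi (0:ℝ),
        y ^ (-α₀) * (α₀ * y ^ (-1 - 2 * α₀) * Real.exp (-y ^ (-α₀))))
        = ∫ y in Ioi (0:ℝ), (α₀ * y ^ (-α₀ - 1)) * ((y ^ (-α₀)) ^ 2 * Real.exp (-y ^ (-α₀))) := by
      refine setIntegral_congr_fun measurableSet_Ioi fun y hy => ?_
      have hy0 : (0:ℝ) < y := hy
      have e1 : y ^ (-1 - 2 * α₀) = y ^ (-α₀ - 1) * y ^ (-α₀) := by
        rw [← Real.rpow_add hy0]; ring_nf
      rw [e1, sq]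
      ring
    rw [heq, this]
    have h3 : ∫ t in Ioi (0:ℝ), t ^ 2 * Real.exp (-t) = Real.Gamma 3 := by
      rw [Real.Gamma_eq_integral (by norm_num : (0:ℝ) < 3)]
      refine setIntegral_congr_fun measurableSet_Ioi fun t ht => ?_
      have ht0 : (0:ℝ) < t := ht
      rw [show (3:ℝ) - 1 = ((2:ℕ):ℝ) by norm_num, Real.rpow_natCast]
      ring
    rw [h3]
    have := Real.Gamma_nat_eq_factorial 2
    norm_num at this
    convert this using 2
    norm_num
  -- I1
  have hI1 : (∫ y in Set.Ioi (0:ℝ),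
      y ^ (-α₀) * Real.log y * (α₀ * y ^ (-1 - 2 * α₀) * Real.exp (-y ^ (-α₀))))
      = -(1/α₀) * ∫ t in Ioi (0:ℝ), t ^ 2 * Real.log t * Real.exp (-t) := by
    have := key (fun t => -(1/α₀) * (t ^ 2 * Real.log t * Real.exp (-t)))
    rw [← integral_const_mul, ← this]
    refine setIntegral_congr_fun measurableSet_Ioi fun y hy => ?_
    have hy0 : (0:ℝ) < y := hy
    have e1 : y ^ (-1 - 2 * α₀) = y ^ (-α₀ - 1) * y ^ (-α₀) := by
      rw [← Real.rpow_add hy0]; ring_nf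
    have e2 : Real.log (y ^ (-α₀)) = -α₀ * Real.log y := Real.log_rpow hy0 (-α₀) ▸ by
      rw [Real.log_rpow hy0]
    rw [e1, e2, sq]
    field_simp
  -- I3
  have hI3 : (∫ y in Set.Ioi (0:ℝ),
      Real.log y * (α₀ * y ^ (-1 - 2 * α₀) * Real.exp (-y ^ (-α₀))))
      = -(1/α₀) * ∫ t in Ioi (0:ℝ), t ^ 1 * Real.log t * Real.exp (-t) := by
    have := key (fun t => -(1/α₀) * (t ^ 1 * Real.log t * Real.exp (-t)))
    rw [← integral_const_mul, ← this]
    refine setIntegral_congr_fun measurableSet_Ioi fun y hy => ?_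
    have hy0 : (0:ℝ) < y := hy
    have e1 : y ^ (-1 - 2 * α₀) = y ^ (-α₀ - 1) * y ^ (-α₀) := by
      rw [← Real.rpow_add hy0]; ring_nf
    have e2 : Real.log (y ^ (-α₀)) = -α₀ * Real.log y := by
      rw [Real.log_rpow hy0]
    rw [e1, e2, pow_one]
    field_simp
  -- combine
  have hJ : (∫ t in Ioi (0:ℝ), t ^ 2 * Real.log t * Real.exp (-t))
      - 2 * (∫ t in Ioi (0:ℝ), t ^ 1 * Real.log t * Real.exp (-t)) = 1 := by
    rw [← integral_const_mul, ← integral_sub (aux_integrable 2 one_le_two)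
      ((aux_integrable 1 le_rfl).const_mul 2), ← key_ftc]
    refine setIntegral_congr_fun measurableSet_Ioi fun t ht => ?_
    ring
  rw [hI1, hI2, hI3]
  set J2 := ∫ t in Ioi (0:ℝ), t ^ 2 * Real.log t * Real.exp (-t)
  set J1 := ∫ t in Ioi (0:ℝ), t ^ 1 * Real.log t * Real.exp (-t)
  have : -(1/α₀) * J2 - 2 * (-(1/α₀) * J1) = -(1/α₀) * (J2 - 2 * J1) := by ring
  rw [this, hJ, mul_one]
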